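/- arXiv:2001.09441 — 5 statements merged into one kernel-verified Lean document; each statement's English description precedes it below -/
import Mathlib

section
/- With the setup of the compactness lemma (n, r ≥ 1, s ≥ 0, d_i > 0, κ_i ∈ (0,1) for i ≤ r, κ_i = 0 for i > r, T_𝔞, T_i > 0, m maximizing κ_i/T_i over i ≤ r), fix ε > 0 and let Γ_𝔞(ε) = max{n/(2ε), (∑_{i=1}^{r+s} d_i(1-κ_i))/ε} and, for j ∈ {1,...,r+s}, Γ_j(ε) = (2 Γ_𝔞(ε)²/(T_𝔞 d_j(1-κ_j))) (∑_{i=1}^{r+s} d_i(1-κ_i)/n + 1/2). Suppose positive reals α, α_1,...,α_{r+s} satisfy n T_𝔞/α + ∑ d_i T_i/α_i = 1, α ≤ Γ_𝔞(ε), and α_j > Γ_j(ε) for some j. Then the scalar curvature S = -(1/4)∑_{i=1}^{r+s}(α_i/α²)d_i(1-κ_i) + (1/2)∑_{i=1}^{r+s} d_i(1-κ_i)/α + n/(4α) + (1/4)∑_{i=1}^{r} κ_i d_i/α_i satisfies S < κ_m/(4T_m). -/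
open Finset

theorem stmt2 (n r s : ℕ) (hn : 0 < n) (hr : 0 < r)
    (d κ T α : ℕ → ℝ) (Ta αa ε : ℝ) (m j : ℕ)
    (hd : ∀ i ∈ Icc 1 (r + s), 0 < d i)
    (hκ1 : ∀ i ∈ Icc 1 r, 0 < κ i ∧ κ i < 1)
    (hκ2 : ∀ i ∈ Icc (r + 1) (r + s), κ i = 0)
    (hTa : 0 < Ta) (hT : ∀ i ∈ Icc 1 (r + s), 0 < T i)
    (hm : m ∈ Icc 1 r) (hmax : ∀ i ∈ Icc 1 r, κ i / T i ≤ κ m / T m)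
    (hε : 0 < ε)
    (hαa : 0 < αa) (hα : ∀ i ∈ Icc 1 (r + s), 0 < α i)
    (hconstr : (n : ℝ) * Ta / αa + ∑ i ∈ Icc 1 (r + s), d i * T i / α i = 1)
    (Γa : ℝ)
    (hΓa : Γa = max ((n : ℝ) / (2 * ε)) ((∑ i ∈ Icc 1 (r + s), d i * (1 - κ i)) / ε))
    (hsmall : αa ≤ Γa)
    (hj : j ∈ Icc 1 (r + s))
    (hjbig : α j > (2 * Γa ^ 2 / (Ta * d j * (1 - κ j)))
      * ((∑ i ∈ Icc 1 (r + s), d i * (1 - κ i)) / n + 1 / 2)) :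
    -(1 / 4) * ∑ i ∈ Icc 1 (r + s), (α i / αa ^ 2) * d i * (1 - κ i)
      + (1 / 2) * ∑ i ∈ Icc 1 (r + s), d i * (1 - κ i) / αa
      + (n : ℝ) / (4 * αa)
      + (1 / 4) * ∑ i ∈ Icc 1 r, κ i * d i / α i
    < κ m / (4 * T m) := by
  have hrs1 : 1 ≤ r + s := le_trans hr (Nat.le_add_right r s)
  have hjmem := hj
  simp only [mem_Icc] at hjmem
  have hn' : (0:ℝ) < n := Nat.cast_pos.2 hn
  have hκle : ∀ i ∈ Icc 1 (r + s), 0 ≤ κ i ∧ κ i ≤ 1 := by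
    intro i hi
    simp only [mem_Icc] at hi
    by_cases hir : i ≤ r
    · have h := hκ1 i (mem_Icc.2 ⟨hi.1, hir⟩)
      exact ⟨h.1.le, h.2.le⟩
    · have h := hκ2 i (mem_Icc.2 ⟨by omega, hi.2⟩)
      rw [h]; norm_num
  set D := ∑ i ∈ Icc 1 (r + s), d i * (1 - κ i) with hDdef
  have hD0 : 0 ≤ D := Finset.sum_nonneg fun i hi =>
    mul_nonneg (hd i hi).le (by linarith [(hκle i hi).2])
  have hκj : κ j < 1 := by
    by_cases hir : j ≤ r
    · exact (hκ1 j (mem_Icc.2 ⟨hjmem.1, hir⟩)).2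
    · rw [hκ2 j (mem_Icc.2 ⟨by omega, hjmem.2⟩)]; norm_num
  have hdj := hd j hj
  have hjP : 0 < d j * (1 - κ j) := mul_pos hdj (by linarith)
  have hGpos : 0 < Γa := by
    have h1 : (n:ℝ)/(2*ε) ≤ Γa := hΓa ▸ le_max_left _ _
    have h2 : 0 < (n:ℝ)/(2*ε) := div_pos hn' (by linarith)
    linarith
  -- constraint consequences
  have hSpos : 0 < ∑ i ∈ Icc 1 (r + s), d i * T i / α i :=
    Finset.sum_pos (fun i hi => div_pos (mul_pos (hd i hi) (hT i hi)) (hα i hi))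
      (Finset.nonempty_Icc.2 hrs1)
  have hfrac : 0 < (n:ℝ) * Ta / αa := div_pos (mul_pos hn' hTa) hαa
  have hSlt1 : ∑ i ∈ Icc 1 (r + s), d i * T i / α i < 1 := by linarith
  have hnTa : (n:ℝ) * Ta < αa := (div_lt_one hαa).1 (by linarith)
  have hnTapos : (0:ℝ) < (n:ℝ) * Ta := mul_pos hn' hTa
  -- single term of the negative sum
  have hA : (α j / αa ^ 2) * d j * (1 - κ j)
      ≤ ∑ i ∈ Icc 1 (r + s), (α i / αa ^ 2) * d i * (1 - κ i) := by
    apply Finset.single_le_sum (f := fun i => (α i / αa ^ 2) * d i * (1 - κ i)) _ hj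
    intro i hi
    have h1 := hκle i hi
    have h2 := hα i hi
    have h3 := hd i hi
    exact mul_nonneg (mul_nonneg (div_pos h2 (by positivity)).le h3.le) (by linarith [h1.2])
  -- the negative term bound
  have hGa2 : (0:ℝ) < Γa ^ 2 := by positivity
  have hαa2 : (0:ℝ) < αa ^ 2 := by positivity
  have hsq : αa ^ 2 ≤ Γa ^ 2 := by nlinarith
  have hdivle : α j / Γa ^ 2 ≤ α j / αa ^ 2 := by
    rw [div_le_div_iff₀ hGa2 hαa2]
    exact mul_le_mul_of_nonneg_left hsq (hα j hj).le
  have hstep1 : (1/4) * ((α j / Γa ^ 2) * (d j * (1 - κ j)))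
      ≤ (1/4) * ((α j / αa ^ 2) * (d j * (1 - κ j))) := by
    have := mul_le_mul_of_nonneg_right hdivle hjP.le
    linarith
  have hc : (0:ℝ) < (1/4) * ((d j * (1 - κ j)) / Γa ^ 2) := by positivity
  have hmul := mul_lt_mul_of_pos_right hjbig hc
  have hone : (1:ℝ) - κ j ≠ 0 := by linarith
  have hid1 : ((2 * Γa ^ 2 / (Ta * d j * (1 - κ j))) * (D / n + 1 / 2))
      * ((1/4) * ((d j * (1 - κ j)) / Γa ^ 2))
      = (1/2) * (D / ((n:ℝ) * Ta)) + (1/4) * (1/Ta) := by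
    field_simp
    ring
  have hid2 : α j * ((1/4) * ((d j * (1 - κ j)) / Γa ^ 2))
      = (1/4) * ((α j / Γa ^ 2) * (d j * (1 - κ j))) := by ring
  have hneg : (1/2) * (D / ((n:ℝ) * Ta)) + (1/4) * (1/Ta)
      < (1/4) * ((α j / αa ^ 2) * (d j * (1 - κ j))) := by
    rw [hid1, hid2] at hmul
    linarith
  -- positive terms
  have eS2 : ∑ i ∈ Icc 1 (r + s), d i * (1 - κ i) / αa = D / αa := by
    rw [hDdef, Finset.sum_div]
  have hdd : D / αa ≤ D / ((n:ℝ) * Ta) := by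
    rw [div_le_div_iff₀ hαa hnTapos]
    exact mul_le_mul_of_nonneg_left hnTa.le hD0
  have h4' : (n:ℝ) / (4 * αa) < (1/4) * (1/Ta) := by
    have h1 : (n:ℝ) / αa < 1 / Ta := by
      rw [div_lt_div_iff₀ hαa hTa]
      linarith
    have h2 : (n:ℝ) / (4 * αa) = (n / αa) / 4 := by
      rw [mul_comm, ← div_div]
    rw [h2]
    linarith
  -- κ-sum bound
  have hsub : Icc 1 r ⊆ Icc 1 (r + s) := Icc_subset_Icc_right (Nat.le_add_right r s)
  have hκm : 0 < κ m / T m := div_pos (hκ1 m hm).1 (hT m (hsub hm))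
  have hCle : ∑ i ∈ Icc 1 r, κ i * d i / α i
      ≤ (κ m / T m) * ∑ i ∈ Icc 1 r, d i * T i / α i := by
    rw [Finset.mul_sum]
    apply Finset.sum_le_sum
    intro i hi
    have hi' := hsub hi
    have hTi := hT i hi'
    have hαi := hα i hi'
    have hdi := hd i hi'
    have hid : κ i * d i / α i = (κ i / T i) * (d i * T i / α i) := by
      field_simp
    rw [hid]
    exact mul_le_mul_of_nonneg_right (hmax i hi) (by positivity)
  have hsum_sub : ∑ i ∈ Icc 1 r, d i * T i / α i ≤ ∑ i ∈ Icc 1 (r + s), d i * T i / α i :=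
    Finset.sum_le_sum_of_subset_of_nonneg hsub
      (fun i hi _ => (div_pos (mul_pos (hd i hi) (hT i hi)) (hα i hi)).le)
  have hfin : (κ m / T m) * (∑ i ∈ Icc 1 r, d i * T i / α i) < κ m / T m := by
    calc (κ m / T m) * (∑ i ∈ Icc 1 r, d i * T i / α i)
        ≤ (κ m / T m) * (∑ i ∈ Icc 1 (r + s), d i * T i / α i) :=
          mul_le_mul_of_nonneg_left hsum_sub hκm.le
      _ < (κ m / T m) * 1 := mul_lt_mul_of_pos_left hSlt1 hκm
      _ = κ m / T m := mul_one _
  have etarget : κ m / (4 * T m) = (1/4) * (κ m / T m) := by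
    rw [div_mul_eq_mul_div, one_mul, div_div, mul_comm]
  rw [eS2, etarget]
  linarith [hA, hneg, hdd, h4', hCle, hfin]
end

section
/- Assume n, d_1,...,d_{r+s} > 0, κ_i ∈ (0,1) for i ≤ r and κ_i = 0 for i > r, and T_𝔞, T_1,...,T_{r+s} > 0, s ≥ 0, r ≥ 1. Suppose positive reals α, α_1,...,α_{r+s} satisfy, for every j ∈ {1,...,r}: -(d_j T_j/(2 n T_𝔞 α α_j)) ∑_{i=1}^{r+s} α_i d_i (1-κ_i) - (α_j/(4α²)) d_j (1-κ_j) + (d_j T_j/(2 n T_𝔞 α_j)) ∑_{i=1}^{r+s} d_i (1-κ_i) + d_j T_j/(4 T_𝔞 α_j) - κ_j d_j/(4 α_j) = 0. Then n T_𝔞 max_{j=1,...,r} κ_j/T_j < 2 ∑_{i=1}^{r} d_i(1-κ_i) + 2s + n. (Here ∑_{i=1}^{r+s} d_i(1-κ_i) = ∑_{i=1}^{r} d_i(1-κ_i) + s when d_i = 1 for i > r; more generally the conclusion is n T_𝔞 κ_j/T_j < 2 ∑_{i=1}^{r+s} d_i(1-κ_i) + n for each j.) -/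
open Finset

theorem stmt5 (n r s : ℕ) (hn : 0 < n) (hr : 0 < r)
    (d κ T α : ℕ → ℝ) (Ta αa : ℝ)
    (hd : ∀ i ∈ Icc 1 (r + s), 0 < d i)
    (hd1 : ∀ i ∈ Icc (r + 1) (r + s), d i = 1)
    (hκ1 : ∀ i ∈ Icc 1 r, 0 < κ i ∧ κ i < 1)
    (hκ2 : ∀ i ∈ Icc (r + 1) (r + s), κ i = 0)
    (hTa : 0 < Ta) (hT : ∀ i ∈ Icc 1 (r + s), 0 < T i)
    (hαa : 0 < αa) (hα : ∀ i ∈ Icc 1 (r + s), 0 < α i)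
    (hcrit : ∀ j ∈ Icc 1 r,
      -(d j * T j / (2 * n * Ta * αa * α j)) * ∑ i ∈ Icc 1 (r + s), α i * d i * (1 - κ i)
      - (α j / (4 * αa ^ 2)) * d j * (1 - κ j)
      + (d j * T j / (2 * n * Ta * α j)) * ∑ i ∈ Icc 1 (r + s), d i * (1 - κ i)
      + d j * T j / (4 * Ta * α j)
      - κ j * d j / (4 * α j) = 0) :
    ∀ j ∈ Icc 1 r,
      (n : ℝ) * Ta * (κ j / T j)
        < 2 * ∑ i ∈ Icc 1 r, d i * (1 - κ i) + 2 * s + n := by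
  intro j hj
  have hjr : j ∈ Icc 1 (r + s) := by
    simp only [mem_Icc] at hj ⊢; omega
  -- basic positivity facts
  have hκlt : ∀ i ∈ Icc 1 (r + s), κ i < 1 := by
    intro i hi
    simp only [mem_Icc] at hi
    by_cases h : i ≤ r
    · exact (hκ1 i (by simp only [mem_Icc]; omega)).2
    · rw [hκ2 i (by simp only [mem_Icc]; omega)]; norm_num
  have hκle : ∀ i ∈ Icc 1 (r + s), 0 ≤ κ i := by
    intro i hi
    simp only [mem_Icc] at hi
    by_cases h : i ≤ r
    · exact (hκ1 i (by simp only [mem_Icc]; omega)).1.le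
    · rw [hκ2 i (by simp only [mem_Icc]; omega)]
  -- the weighted sum is positive
  have hSA : 0 < ∑ i ∈ Icc 1 (r + s), α i * d i * (1 - κ i) := by
    apply Finset.sum_pos
    · intro i hi
      have h1 := hα i hi
      have h2 := hd i hi
      have h3 : 0 < 1 - κ i := by have := hκlt i hi; linarith
      positivity
    · exact ⟨j, hjr⟩
  -- the unweighted sum value
  have hIcc : Finset.Icc 1 (r + s) = Finset.Ioc 0 (r + s) := Finset.Icc_add_one_left_eq_Ioc 0 _
  have hIcc2 : Finset.Icc (r + 1) (r + s) = Finset.Ioc r (r + s) := Finset.Icc_add_one_left_eq_Ioc r _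
  have hsplit : ∑ i ∈ Icc 1 (r + s), d i * (1 - κ i)
      = (∑ i ∈ Icc 1 r, d i * (1 - κ i)) + s := by
    rw [hIcc, ← Finset.sum_Ioc_consecutive _ (Nat.zero_le r) (Nat.le_add_right r s),
      ← Finset.Icc_add_one_left_eq_Ioc 0 r]
    congr 1
    rw [← hIcc2, Finset.sum_congr rfl (fun i hi => by rw [hd1 i hi, hκ2 i hi] : ∀ i ∈ Icc (r+1) (r+s), d i * (1 - κ i) = 1 * (1 - 0))]
    simp [hIcc2, Nat.card_Ioc]
  have hnpos : (0 : ℝ) < n := by exact_mod_cast hn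
  have hdj := hd j hjr
  have hTj := hT j hjr
  have hαj := hα j hjr
  have hκj := hκ1 j hj
  -- from criticality, the last three terms sum to something positive
  have hc := hcrit j hj
  have hX : 0 < d j * T j / (2 * n * Ta * αa * α j) *
      ∑ i ∈ Icc 1 (r + s), α i * d i * (1 - κ i) := by
    apply mul_pos _ hSA
    positivity
  have hB : 0 < (α j / (4 * αa ^ 2)) * d j * (1 - κ j) := by
    have h3 : 0 < 1 - κ j := by have := hκj.2; linarith
    positivity
  have hpos : 0 < (d j * T j / (2 * n * Ta * α j)) * ∑ i ∈ Icc 1 (r + s), d i * (1 - κ i)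
      + d j * T j / (4 * Ta * α j)
      - κ j * d j / (4 * α j) := by linarith
  set S : ℝ := ∑ i ∈ Icc 1 (r + s), d i * (1 - κ i) with hSdef
  have hS' : ∑ i ∈ Icc 1 r, d i * (1 - κ i) = S - s := by
    rw [hsplit]; ring
  rw [hS']
  rw [show (n : ℝ) * Ta * (κ j / T j) = n * Ta * κ j / T j by ring, div_lt_iff₀ hTj]
  have hne1 : (2 : ℝ) * n * Ta * α j ≠ 0 := by positivity
  have hne2 : (4 : ℝ) * Ta * α j ≠ 0 := by positivity
  have hne3 : (4 : ℝ) * α j ≠ 0 := by positivity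
  rw [div_mul_eq_mul_div, div_add_div _ _ hne1 hne2, div_sub_div _ _ (by positivity) hne3,
    lt_div_iff₀ (by positivity)] at hpos
  have key : (n : ℝ) * Ta * κ j < (2 * S + n) * T j := by
    nlinarith [hpos, mul_pos (mul_pos hTa hdj) (mul_pos hαj hαj)]
  linarith [key]
end

section
/- Let n, d_1 > 0, κ_1 ∈ (0,1), T_𝔞, T_1 > 0 and c ≥ c' > 0. Suppose positive reals α, α_1 and α', α_1' satisfy the Ricci equations: (1/4)(κ_1(1 - α_1²/α²) + α_1²/α²) = c T_1, (1/4)(κ_1(1 - α_1'²/α'²) + α_1'²/α'²) = c' T_1, and -(1/2)(d_1(1-κ_1)/n)(α_1/α - 1) + 1/4 = c T_𝔞, -(1/2)(d_1(1-κ_1)/n)(α_1'/α' - 1) + 1/4 = c' T_𝔞. Then α_1/α = α_1'/α', and consequently c = c'. -/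
theorem stmt7 (n d1 κ1 Ta T1 c c' α α1 α' α1' : ℝ)
    (hn : 0 < n) (hd1 : 0 < d1) (hκ1 : 0 < κ1) (hκ1' : κ1 < 1)
    (hTa : 0 < Ta) (hT1 : 0 < T1)
    (hc' : 0 < c') (hcc' : c' ≤ c)
    (hα : 0 < α) (hα1 : 0 < α1) (hα' : 0 < α') (hα1' : 0 < α1')
    (h1 : (1 / 4) * (κ1 * (1 - α1 ^ 2 / α ^ 2) + α1 ^ 2 / α ^ 2) = c * T1)
    (h2 : (1 / 4) * (κ1 * (1 - α1' ^ 2 / α' ^ 2) + α1' ^ 2 / α' ^ 2) = c' * T1)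
    (h3 : -(1 / 2) * (d1 * (1 - κ1) / n) * (α1 / α - 1) + 1 / 4 = c * Ta)
    (h4 : -(1 / 2) * (d1 * (1 - κ1) / n) * (α1' / α' - 1) + 1 / 4 = c' * Ta) :
    α1 / α = α1' / α' ∧ c = c' := by
  set x := α1 / α with hxdef
  set y := α1' / α' with hydef
  have hx : 0 < x := div_pos hα1 hα
  have hy : 0 < y := div_pos hα1' hα'
  have hx2 : α1 ^ 2 / α ^ 2 = x ^ 2 := by rw [hxdef, div_pow]
  have hy2 : α1' ^ 2 / α' ^ 2 = y ^ 2 := by rw [hydef, div_pow]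
  rw [hx2] at h1
  rw [hy2] at h2
  have hK : 0 < d1 * (1 - κ1) / n := div_pos (mul_pos hd1 (by linarith)) hn
  -- from h1 - h2 : (1-κ1)(x² - y²) = 4(c-c')T1 ≥ 0
  have e1 : (1 - κ1) * (x ^ 2 - y ^ 2) = 4 * (c - c') * T1 := by linear_combination 4 * h1 - 4 * h2
  -- from h3 - h4 : K(y - x)/2 = (c-c')Ta ≥ 0
  have e2 : (d1 * (1 - κ1) / n) * (y - x) = 2 * (c - c') * Ta := by linear_combination 2 * h3 - 2 * h4
  have hcc : 0 ≤ c - c' := by linarith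
  have hyx : x ≤ y := by nlinarith [mul_nonneg (mul_nonneg (by norm_num : (0:ℝ) ≤ 2) hcc) hTa.le]
  have hxy : y ≤ x := by
    by_contra h
    push_neg at h
    have h5 : 0 < (1 - κ1) * ((y - x) * (x + y)) :=
      mul_pos (by linarith) (mul_pos (by linarith) (by linarith))
    nlinarith [mul_nonneg hcc hT1.le]
  have hxeq : x = y := le_antisymm hyx hxy
  refine ⟨hxeq, ?_⟩
  rw [hxeq] at h1
  have := h1.symm.trans h2
  have hT1ne : T1 ≠ 0 := hT1.ne'
  exact mul_right_cancel₀ hT1ne this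
end

section
/- Let T_1, T_2 > 0 and define S(α_1, α_2) = -((α_1 α_2 - 3T_1 α_2 - 3T_2 α_1)² (α_1 + α_2))/(144 α_1² α_2²) + (α_1 α_2 - 3T_1 α_2 - 3T_2 α_1)/(2 α_1 α_2) + 3/(16 α_1) + 3/(16 α_2) on D = {(α_1, α_2) ∈ (0,∞)² : 3T_1/α_1 + 3T_2/α_2 < 1}. If T_1 = T_2 = 1/10, then S has no critical point on D. -/
theorem stmt12 (T1 T2 : ℝ) (hT1 : T1 = 1 / 10) (hT2 : T2 = 1 / 10)
    (S : ℝ × ℝ → ℝ)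
    (hS : ∀ p : ℝ × ℝ, S p =
      -((p.1 * p.2 - 3 * T1 * p.2 - 3 * T2 * p.1) ^ 2 * (p.1 + p.2))
          / (144 * p.1 ^ 2 * p.2 ^ 2)
      + (p.1 * p.2 - 3 * T1 * p.2 - 3 * T2 * p.1) / (2 * p.1 * p.2)
      + 3 / (16 * p.1) + 3 / (16 * p.2)) :
    ∀ p : ℝ × ℝ, 0 < p.1 → 0 < p.2 → 3 * T1 / p.1 + 3 * T2 / p.2 < 1 →
      fderiv ℝ S p ≠ 0 := by
  subst hT1 hT2
  have hSfun : S = fun p : ℝ × ℝ =>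
      -((p.1 * p.2 - 3 * (1/10) * p.2 - 3 * (1/10) * p.1) ^ 2 * (p.1 + p.2))
          / (144 * p.1 ^ 2 * p.2 ^ 2)
      + (p.1 * p.2 - 3 * (1/10) * p.2 - 3 * (1/10) * p.1) / (2 * p.1 * p.2)
      + 3 / (16 * p.1) + 3 / (16 * p.2) := funext hS
  rintro ⟨a, b⟩ ha hb hD h0
  simp only at ha hb hD
  -- positivity of u
  have hu : 0 < a * b - 3 * (1/10) * b - 3 * (1/10) * a := by
    rw [div_add_div _ _ ha.ne' hb.ne', div_lt_one (by positivity)] at hD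
    nlinarith
  -- differentiability of S at (a,b)
  have hd : DifferentiableAt ℝ S (a, b) := by
    rw [hSfun]
    simp only [div_eq_mul_inv]
    fun_prop (disch := (simp only [Prod.fst, Prod.snd]; positivity))
  have hf0 : HasFDerivAt S 0 (a, b) := h0 ▸ hd.hasFDerivAt
  have hι : HasDerivAt (fun x : ℝ => (x, b)) ((1 : ℝ), (0 : ℝ)) a :=
    (hasDerivAt_id a).prodMk (hasDerivAt_const a b)
  have hcomp : HasDerivAt (fun x : ℝ => S (x, b)) 0 a := by
    have := hf0.comp_hasDerivAt a hι
    simpa [Function.comp_def] using this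
  -- explicit derivative
  set u : ℝ := a * b - 3 * (1/10) * b - 3 * (1/10) * a with hu_def
  have hE : HasDerivAt (fun x : ℝ => S (x, b))
      (-((3/5) * u * (a + b) * a * b + u ^ 2 * a ^ 2) / (144 * a ^ 4 * b ^ 2)
        - 3 / (80 * a ^ 2)) a := by
    have huD : HasDerivAt (fun x : ℝ => x * b - 3 * (1/10) * b - 3 * (1/10) * x)
        (b - 3 * (1/10)) a := by
      have h1 : HasDerivAt (fun x : ℝ => x * b) b a := by
        simpa using (hasDerivAt_id a).mul_const b
      have h2 : HasDerivAt (fun x : ℝ => 3 * (1/10) * x) (3 * (1/10)) a := by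
        simpa using (hasDerivAt_id a).const_mul (3 * (1/10 : ℝ))
      exact (h1.sub_const (3 * (1/10) * b)).sub h2
    have hN1 : HasDerivAt
        (fun x : ℝ => (x * b - 3 * (1/10) * b - 3 * (1/10) * x) ^ 2 * (x + b))
        ((2 * u ^ 1 * (b - 3 * (1/10))) * (a + b) + u ^ 2 * 1) a :=
      (huD.pow 2).mul ((hasDerivAt_id a).add_const b)
    have hD1 : HasDerivAt (fun x : ℝ => 144 * x ^ 2 * b ^ 2)
        ((144 * (2 * a ^ 1)) * b ^ 2) a :=
      (((hasDerivAt_pow 2 a).const_mul 144).mul_const (b ^ 2))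
    have ht1 := (hN1.neg).div hD1 (by positivity : (144 * a ^ 2 * b ^ 2 : ℝ) ≠ 0)
    have hD2 : HasDerivAt (fun x : ℝ => 2 * x * b) (2 * 1 * b) a :=
      (((hasDerivAt_id a).const_mul 2).mul_const b)
    have ht2 := huD.div hD2 (by positivity : (2 * a * b : ℝ) ≠ 0)
    have hD3 : HasDerivAt (fun x : ℝ => 16 * x) (16 * 1) a :=
      ((hasDerivAt_id a).const_mul 16)
    have ht3 := (hasDerivAt_const a (3:ℝ)).div hD3 (by positivity : (16 * a : ℝ) ≠ 0)
    have ht4 : HasDerivAt (fun _ : ℝ => 3 / (16 * b)) 0 a := hasDerivAt_const _ _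
    have H := ((ht1.add ht2).add ht3).add ht4
    rw [hSfun]
    convert H using 1
    · rfl
    · rfl
    · rfl
    have h16 : (16 * a : ℝ) ≠ 0 := by positivity
    simp only [Pi.neg_apply, hu_def]
    field_simp
    ring
  have := hcomp.unique hE
  have hpos1 : 0 < ((3/5) * u * (a + b) * a * b + u ^ 2 * a ^ 2) / (144 * a ^ 4 * b ^ 2) := by
    positivity
  have hpos2 : 0 < 3 / (80 * a ^ 2 : ℝ) := by positivity
  rw [neg_div] at this
  linarith [this]
end

section
/- Let n, d_i > 0 (i = 1,...,r+s), κ_i ∈ (0,1) for i ≤ r, κ_i = 0 for i > r, T_𝔞 ≥ 0 and T_1,...,T_{r+s} > 0, with m maximizing κ_i/T_i over i ≤ r, and suppose κ_m tr_Q T/T_m < d + d_m - κ_m d_m where tr_Q T = n T_𝔞 + ∑ d_i T_i and d = n + ∑ d_i. Then the supremum of S over the constraint set {(α, α_1,...,α_{r+s}) ∈ (0,∞)^{r+s+1} : n T_𝔞/α + ∑ d_i T_i/α_i = 1} is attained, where S = -(1/4)∑_{i=1}^{r+s}(α_i/α²)d_i(1-κ_i) + (1/2)∑ d_i(1-κ_i)/α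 + n/(4α) + (1/4)∑_{i=1}^{r} κ_i d_i/α_i. -/
open Finset

private def vv (N : ℕ) (x : Fin N → ℝ) (i : ℕ) : ℝ :=
  if h : i < N then x ⟨i, h⟩ else 0

private lemma continuous_vv (N : ℕ) (i : ℕ) : Continuous fun x : Fin N → ℝ => vv N x i := by
  unfold vv
  split
  · exact continuous_apply _
  · exact continuous_const

private noncomputable def toX (N : ℕ) (βa : ℝ) (β : ℕ → ℝ) : Fin N → ℝ :=
  fun j => if j.val = 0 then 1 / βa else 1 / β j.val

private lemma vv_toX_zero (N : ℕ) (hN : 0 < N) (βa : ℝ) (β : ℕ → ℝ) :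
    vv N (toX N βa β) 0 = 1 / βa := by simp [vv, toX, hN]

private lemma vv_toX (N : ℕ) (βa : ℝ) (β : ℕ → ℝ) (i : ℕ) (h0 : i ≠ 0) (h : i < N) :
    vv N (toX N βa β) i = 1 / β i := by simp [vv, toX, h, h0]

private noncomputable def FF (r k N : ℕ) (d κ : ℕ → ℝ) (c R : ℝ) (x : Fin N → ℝ) : ℝ :=
  (1/4) * ∑ i ∈ Icc 1 r, κ i * d i * vv N x i + c * vv N x 0
    - (1/4) * ∑ i ∈ Icc 1 k, d i * (1 - κ i)
        * ((vv N x 0)^2 / max (vv N x i) ((vv N x 0)^2 / R))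

private lemma FF_contOn (r k N : ℕ) (d κ : ℕ → ℝ) (c R δ : ℝ) (hR : 0 < R) (hδ : 0 < δ) :
    ContinuousOn (FF r k N d κ c R) {x | δ ≤ vv N x 0} := by
  have h0 : Continuous fun x : Fin N → ℝ => vv N x 0 := continuous_vv N 0
  apply ContinuousOn.sub
  · apply ContinuousOn.add
    · exact (continuous_const.mul <| continuous_finset_sum _ fun i _ =>
        continuous_const.mul (continuous_vv N i)).continuousOn
    · exact (continuous_const.mul h0).continuousOn
  · apply ContinuousOn.mul continuousOn_const
    apply continuousOn_finset_sum
    intro i _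
    apply ContinuousOn.mul continuousOn_const
    apply ContinuousOn.div
    · exact (h0.pow 2).continuousOn
    · exact ((continuous_vv N i).max ((h0.pow 2).div_const R)).continuousOn
    · intro x hx
      have hx0 : 0 < vv N x 0 := lt_of_lt_of_le hδ hx
      have : 0 < (vv N x 0)^2 / R := div_pos (pow_pos hx0 2) hR
      exact (lt_of_lt_of_le this (le_max_right _ _)).ne'

set_option maxHeartbeats 1000000 in
theorem stmt19 (n r s : ℕ) (hn : 0 < n) (hr : 0 < r)
    (d κ T : ℕ → ℝ) (Ta : ℝ) (m : ℕ)
    (hd : ∀ i ∈ Icc 1 (r + s), 0 < d i)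
    (hκ1 : ∀ i ∈ Icc 1 r, 0 < κ i ∧ κ i < 1)
    (hκ2 : ∀ i ∈ Icc (r + 1) (r + s), κ i = 0)
    (hTa : 0 ≤ Ta) (hT : ∀ i ∈ Icc 1 (r + s), 0 < T i)
    (hm : m ∈ Icc 1 r) (hmax : ∀ i ∈ Icc 1 r, κ i / T i ≤ κ m / T m)
    (hsuf : κ m * ((n : ℝ) * Ta + ∑ i ∈ Icc 1 (r + s), d i * T i) / T m
      < ((n : ℝ) + ∑ i ∈ Icc 1 (r + s), d i) + d m - κ m * d m)
    (S : ℝ → (ℕ → ℝ) → ℝ)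
    (hS : ∀ αa α, S αa α =
      -(1 / 4) * ∑ i ∈ Icc 1 (r + s), (α i / αa ^ 2) * d i * (1 - κ i)
      + (1 / 2) * ∑ i ∈ Icc 1 (r + s), d i * (1 - κ i) / αa
      + (n : ℝ) / (4 * αa)
      + (1 / 4) * ∑ i ∈ Icc 1 r, κ i * d i / α i) :
    ∃ αa : ℝ, ∃ α : ℕ → ℝ,
      (0 < αa ∧ (∀ i ∈ Icc 1 (r + s), 0 < α i)
        ∧ (n : ℝ) * Ta / αa + ∑ i ∈ Icc 1 (r + s), d i * T i / α i = 1)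
      ∧ ∀ βa : ℝ, ∀ β : ℕ → ℝ,
          0 < βa → (∀ i ∈ Icc 1 (r + s), 0 < β i) →
          (n : ℝ) * Ta / βa + ∑ i ∈ Icc 1 (r + s), d i * T i / β i = 1 →
          S βa β ≤ S αa α := by
  classical
  set N := r + s + 1 with hNdef
  have hNpos : 0 < N := Nat.succ_pos _
  have hsubIcc : Icc 1 r ⊆ Icc 1 (r + s) := Icc_subset_Icc le_rfl (Nat.le_add_right r s)
  have hmIcc : m ∈ Icc 1 (r + s) := hsubIcc hm
  have hltN : ∀ i ∈ Icc 1 (r + s), i < N := by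
    intro i hi
    rw [mem_Icc] at hi
    omega
  have hne0 : ∀ i ∈ Icc 1 (r + s), i ≠ 0 := by
    intro i hi
    rw [mem_Icc] at hi
    omega
  have hdT : ∀ i ∈ Icc 1 (r + s), 0 < d i * T i := fun i hi => mul_pos (hd i hi) (hT i hi)
  have hκ01 : ∀ i ∈ Icc 1 (r + s), 0 ≤ κ i ∧ κ i < 1 := by
    intro i hi
    rw [mem_Icc] at hi
    by_cases h : i ≤ r
    · have := hκ1 i (mem_Icc.mpr ⟨hi.1, h⟩)
      exact ⟨this.1.le, this.2⟩
    · have := hκ2 i (mem_Icc.mpr ⟨by omega, hi.2⟩)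
      rw [this]; norm_num
  have h1κ : ∀ i ∈ Icc 1 (r + s), 0 < 1 - κ i := fun i hi => by linarith [(hκ01 i hi).2]
  have hIccNe : (Icc 1 (r + s)).Nonempty :=
    ⟨1, mem_Icc.mpr ⟨le_rfl, by omega⟩⟩
  have hTm : 0 < T m := hT m hmIcc
  have hdm : 0 < d m := hd m hmIcc
  have hκm : 0 < κ m := (hκ1 m hm).1
  have hκm1 : κ m < 1 := (hκ1 m hm).2
  -- scalar abbreviations
  set c : ℝ := (∑ i ∈ Icc 1 (r + s), d i * (1 - κ i)) / 2 + n / 4 with hc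
  have hcpos : 0 < c := by
    have h1 : 0 ≤ ∑ i ∈ Icc 1 (r + s), d i * (1 - κ i) :=
      Finset.sum_nonneg fun i hi => le_of_lt (mul_pos (hd i hi) (h1κ i hi))
    have h2 : (0 : ℝ) < n := Nat.cast_pos.mpr hn
    rw [hc]; positivity
  set γ : ℝ := d m ^ 2 * T m * (1 - κ m) with hγ
  have hγpos : 0 < γ := by rw [hγ]; have := sub_pos.mpr hκm1; positivity
  set Em : ℝ := ((n : ℝ) + ∑ i ∈ Icc 1 (r + s), d i) + d m - κ m * d m
      - κ m * ((n : ℝ) * Ta + ∑ i ∈ Icc 1 (r + s), d i * T i) / T m with hEm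
  have hEmpos : 0 < Em := by rw [hEm]; linarith [hsuf]
  set U : ℝ := (n : ℝ) * Ta + ∑ i ∈ Icc 1 (r + s), d i * T i - d m * T m with hU
  have hUnn : 0 ≤ U := by
    have h1 : d m * T m + ∑ i ∈ (Icc 1 (r + s)).erase m, d i * T i
        = ∑ i ∈ Icc 1 (r + s), d i * T i := Finset.add_sum_erase _ (fun i => d i * T i) hmIcc
    have h2 : 0 ≤ ∑ i ∈ (Icc 1 (r + s)).erase m, d i * T i :=
      Finset.sum_nonneg fun i hi => (hdT i (Finset.mem_of_mem_erase hi)).le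
    have h3 : 0 ≤ (n : ℝ) * Ta := mul_nonneg (Nat.cast_nonneg n) hTa
    rw [hU]; linarith
  set τ : ℝ := γ / Em + 1 with hτ
  have hτpos : 0 < τ := by rw [hτ]; positivity
  set t0 : ℝ := U + τ with ht0
  have ht0pos : 0 < t0 := by rw [ht0]; linarith
  set φ : ℝ := d m * T m * t0 / τ with hφ
  have hφpos : 0 < φ := by rw [hφ]; positivity
  set α0 : ℕ → ℝ := fun i => if i = m then φ else t0 with hα0
  have hα0pos : ∀ i ∈ Icc 1 (r + s), 0 < α0 i := by
    intro i _
    rw [hα0]; dsimp only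
    split
    · exact hφpos
    · exact ht0pos
  -- constraint at the witness point
  have hτne : τ ≠ 0 := hτpos.ne'
  have ht0ne : t0 ≠ 0 := ht0pos.ne'
  have hTmne : T m ≠ 0 := hTm.ne'
  have hdmne : d m ≠ 0 := hdm.ne'
  have hcon0 : (n : ℝ) * Ta / t0 + ∑ i ∈ Icc 1 (r + s), d i * T i / α0 i = 1 := by
    have hsplit : ∑ i ∈ Icc 1 (r + s), d i * T i / α0 i
        = d m * T m / φ + ∑ i ∈ (Icc 1 (r + s)).erase m, d i * T i / t0 := by
      rw [← Finset.add_sum_erase _ (fun i => d i * T i / α0 i) hmIcc]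
      congr 1
      · rw [hα0]; simp
      · refine Finset.sum_congr rfl fun i hi => ?_
        have hne : i ≠ m := Finset.ne_of_mem_erase hi
        rw [hα0]; simp [hne]
    have herase : ∑ i ∈ (Icc 1 (r + s)).erase m, d i * T i
        = (∑ i ∈ Icc 1 (r + s), d i * T i) - d m * T m := by
      have h9 : d m * T m + ∑ i ∈ (Icc 1 (r + s)).erase m, d i * T i
          = ∑ i ∈ Icc 1 (r + s), d i * T i := Finset.add_sum_erase _ (fun i => d i * T i) hmIcc
      linarith
    rw [hsplit, ← Finset.sum_div, herase, hφ, ht0, hU]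
    have hden : (n : ℝ) * Ta + ∑ i ∈ Icc 1 (r + s), d i * T i - d m * T m + τ ≠ 0 := by
      have : (0:ℝ) < U + τ := by linarith
      rw [hU] at this
      linarith
    field_simp
    ring
  clear_value c γ Em U τ t0 φ α0
  -- tail of κ vanishes
  have hK0all : ∑ i ∈ Icc 1 (r + s), κ i * d i = ∑ i ∈ Icc 1 r, κ i * d i := by
    refine (Finset.sum_subset hsubIcc fun i hi hni => ?_).symm
    rw [mem_Icc] at hi
    rw [mem_Icc] at hni
    have : κ i = 0 := hκ2 i (mem_Icc.mpr ⟨by omega, hi.2⟩)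
    rw [this, zero_mul]
  have hDval : ∑ i ∈ Icc 1 (r + s), d i * (1 - κ i)
      = (∑ i ∈ Icc 1 (r + s), d i) - ∑ i ∈ Icc 1 r, κ i * d i := by
    rw [← hK0all, ← Finset.sum_sub_distrib]
    exact Finset.sum_congr rfl fun i _ => by ring
  -- the key value identity
  have hid : S t0 α0 = κ m / (4 * T m) + (Em - γ / τ) / (4 * t0) := by
    have hA : ∑ i ∈ Icc 1 (r + s), α0 i / t0 ^ 2 * d i * (1 - κ i)
        = φ / t0 ^ 2 * d m * (1 - κ m)
          + ((∑ i ∈ Icc 1 (r + s), d i * (1 - κ i)) - d m * (1 - κ m)) / t0 := by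
      rw [← Finset.add_sum_erase _ (fun i => α0 i / t0 ^ 2 * d i * (1 - κ i)) hmIcc]
      congr 1
      · rw [hα0]; simp
      · have e : ∀ i ∈ (Icc 1 (r + s)).erase m,
            α0 i / t0 ^ 2 * d i * (1 - κ i) = d i * (1 - κ i) / t0 := by
          intro i hi
          have hne : i ≠ m := Finset.ne_of_mem_erase hi
          rw [hα0]; dsimp only; rw [if_neg hne]
          field_simp
        rw [Finset.sum_congr rfl e, ← Finset.sum_div]
        congr 1
        have h9 : d m * (1 - κ m) + ∑ i ∈ (Icc 1 (r + s)).erase m, d i * (1 - κ i)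
            = ∑ i ∈ Icc 1 (r + s), d i * (1 - κ i) :=
          Finset.add_sum_erase _ (fun i => d i * (1 - κ i)) hmIcc
        linarith
    have hC : ∑ i ∈ Icc 1 r, κ i * d i / α0 i
        = κ m * d m / φ + ((∑ i ∈ Icc 1 r, κ i * d i) - κ m * d m) / t0 := by
      rw [← Finset.add_sum_erase _ (fun i => κ i * d i / α0 i) hm]
      congr 1
      · rw [hα0]; simp
      · have e : ∀ i ∈ (Icc 1 r).erase m,
            κ i * d i / α0 i = κ i * d i / t0 := by
          intro i hi
          have hne : i ≠ m := Finset.ne_of_mem_erase hi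
          rw [hα0]; dsimp only; rw [if_neg hne]
        rw [Finset.sum_congr rfl e, ← Finset.sum_div]
        congr 1
        have h9 : κ m * d m + ∑ i ∈ (Icc 1 r).erase m, κ i * d i
            = ∑ i ∈ Icc 1 r, κ i * d i :=
          Finset.add_sum_erase _ (fun i => κ i * d i) hm
        linarith
    rw [hS, hA, hC, ← Finset.sum_div, hDval, hφ, hEm, hγ, ht0, hU]
    have hden : (n : ℝ) * Ta + ∑ i ∈ Icc 1 (r + s), d i * T i - d m * T m + τ ≠ 0 := by
      have : (0:ℝ) < U + τ := by linarith
      rw [hU] at this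
      linarith
    set Sd := ∑ i ∈ Icc 1 (r + s), d i with hSd
    set SdT := ∑ i ∈ Icc 1 (r + s), d i * T i with hSdT
    set SK := ∑ i ∈ Icc 1 r, κ i * d i with hSK
    clear_value Sd SdT SK
    field_simp
    ring
  have hEmτ : Em * τ = γ + Em := by
    rw [hτ]
    field_simp
  have hbr : 0 < Em - γ / τ := by
    rw [sub_pos, div_lt_iff₀ hτpos]
    linarith
  have hVgt : κ m / (4 * T m) < S t0 α0 := by
    rw [hid]
    have : 0 < (Em - γ / τ) / (4 * t0) := div_pos hbr (by positivity)
    linarith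
  set V0 : ℝ := S t0 α0 with hV0
  clear_value V0
  -- parameters of the compact region
  set δ : ℝ := min (1 / t0) ((V0 - κ m / (4 * T m)) / (2 * c)) with hδ
  have hδpos : 0 < δ := by
    rw [hδ]
    apply lt_min (by positivity)
    have : 0 < V0 - κ m / (4 * T m) := by linarith
    positivity
  set M : ℝ := max (1 / t0) (4 * c / γ) with hM
  have hδM : δ ≤ 1 / t0 ∧ 1 / t0 ≤ M := ⟨min_le_left _ _, le_max_left _ _⟩
  have hMpos : 0 < M := lt_of_lt_of_le (by positivity) hδM.2
  have hγM : 4 * c ≤ γ * M := by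
    have h1 : 4 * c / γ ≤ M := le_max_right _ _
    calc 4 * c = γ * (4 * c / γ) := by field_simp
    _ ≤ γ * M := by nlinarith
  set ρ : ℝ := (Icc 1 (r + s)).inf' hIccNe (fun i => d i * (1 - κ i)) with hρ
  have hρpos : 0 < ρ := by
    rw [hρ, Finset.lt_inf'_iff]
    exact fun i hi => mul_pos (hd i hi) (h1κ i hi)
  have hρle : ∀ i ∈ Icc 1 (r + s), ρ ≤ d i * (1 - κ i) := by
    intro i hi
    rw [hρ]
    exact Finset.inf'_le _ hi
  set R : ℝ := max (max (1 / t0) (φ / t0 ^ 2))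
      ((4 * (κ m / (4 * T m) + c * M - V0) + 1) / ρ) with hR
  have hRpos : 0 < R :=
    lt_of_lt_of_le (by positivity : (0:ℝ) < 1 / t0) ((le_max_left _ _).trans (le_max_left _ _))
  have hRne : R ≠ 0 := hRpos.ne'
  have hρR : 4 * (κ m / (4 * T m) + c * M - V0) + 1 ≤ ρ * R := by
    have h1 : (4 * (κ m / (4 * T m) + c * M - V0) + 1) / ρ ≤ R := le_max_right _ _
    calc 4 * (κ m / (4 * T m) + c * M - V0) + 1
        = ρ * ((4 * (κ m / (4 * T m) + c * M - V0) + 1) / ρ) := by field_simp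
    _ ≤ ρ * R := by nlinarith
  clear_value δ M ρ R
  -- each constraint term is at most one
  have hterm_le_one : ∀ (βa : ℝ) (β : ℕ → ℝ), 0 < βa → (∀ i ∈ Icc 1 (r + s), 0 < β i) →
      ((n : ℝ) * Ta / βa + ∑ i ∈ Icc 1 (r + s), d i * T i / β i = 1) →
      ∀ i ∈ Icc 1 (r + s), d i * T i / β i ≤ 1 := by
    intro βa β hβa hβ hcon i hi
    have h1 : 0 ≤ (n : ℝ) * Ta / βa := by positivity
    have h2 : d i * T i / β i ≤ ∑ j ∈ Icc 1 (r + s), d j * T j / β j :=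
      Finset.single_le_sum (f := fun j => d j * T j / β j)
        (fun j hj => le_of_lt (div_pos (hdT j hj) (hβ j hj))) hi
    linarith
  -- bound on the κ-part
  have hLbound : ∀ w : ℕ → ℝ, (∀ i ∈ Icc 1 (r + s), 0 ≤ w i) →
      (∑ i ∈ Icc 1 (r + s), d i * T i * w i ≤ 1) →
      (1 / 4) * (∑ i ∈ Icc 1 r, κ i * d i * w i) ≤ κ m / (4 * T m) := by
    intro w hw hwsum
    have h1 : ∑ i ∈ Icc 1 r, κ i * d i * w i
        ≤ ∑ i ∈ Icc 1 r, κ m / T m * (d i * T i * w i) := by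
      apply Finset.sum_le_sum
      intro i hi
      have hiI := hsubIcc hi
      have hTi := hT i hiI
      have hrec : κ i * d i * w i = κ i / T i * (d i * T i * w i) := by
        field_simp
      rw [hrec]
      exact mul_le_mul_of_nonneg_right (hmax i hi)
        (mul_nonneg (mul_nonneg (hd i hiI).le hTi.le) (hw i hiI))
    have h2 : ∑ i ∈ Icc 1 r, κ m / T m * (d i * T i * w i)
        = κ m / T m * ∑ i ∈ Icc 1 r, d i * T i * w i := (Finset.mul_sum _ _ _).symm
    have h3 : ∑ i ∈ Icc 1 r, d i * T i * w i ≤ ∑ i ∈ Icc 1 (r + s), d i * T i * w i :=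
      Finset.sum_le_sum_of_subset_of_nonneg hsubIcc fun i hi _ =>
        mul_nonneg (hdT i hi).le (hw i hi)
    have h4 : (0:ℝ) < κ m / T m := div_pos hκm hTm
    have h5 : κ m / T m * ∑ i ∈ Icc 1 r, d i * T i * w i ≤ κ m / T m * 1 := by
      apply mul_le_mul_of_nonneg_left _ h4.le
      linarith
    have h6 : κ m / T m * 1 = κ m / T m := mul_one _
    have : ∑ i ∈ Icc 1 r, κ i * d i * w i ≤ κ m / T m := by linarith
    calc (1/4) * (∑ i ∈ Icc 1 r, κ i * d i * w i) ≤ (1/4) * (κ m / T m) := by linarith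
    _ = κ m / (4 * T m) := by ring
  -- decomposition of S in reciprocal coordinates
  have hSdec : ∀ (βa : ℝ) (β : ℕ → ℝ), 0 < βa → (∀ i ∈ Icc 1 (r + s), 0 < β i) →
      S βa β = (1 / 4) * (∑ i ∈ Icc 1 r, κ i * d i * (1 / β i)) + c * (1 / βa)
        - (1 / 4) * ∑ i ∈ Icc 1 (r + s), d i * (1 - κ i) * ((1 / βa) ^ 2 / (1 / β i)) := by
    intro βa β hβa hβ
    rw [hS]
    rw [show ∑ i ∈ Icc 1 (r + s), β i / βa ^ 2 * d i * (1 - κ i)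
        = ∑ i ∈ Icc 1 (r + s), d i * (1 - κ i) * ((1 / βa) ^ 2 / (1 / β i)) from
      Finset.sum_congr rfl fun i hi => by
        have h1 := (hβ i hi).ne'
        have h2 := hβa.ne'
        field_simp]
    rw [show ∑ i ∈ Icc 1 r, κ i * d i / β i = ∑ i ∈ Icc 1 r, κ i * d i * (1 / β i) from
      Finset.sum_congr rfl fun i _ => (mul_one_div _ _).symm]
    rw [← Finset.sum_div, hc]
    ring
  -- decomposition of FF at reciprocal points
  have hFFdec : ∀ (βa : ℝ) (β : ℕ → ℝ),
      FF r (r + s) N d κ c R (toX N βa β)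
        = (1 / 4) * (∑ i ∈ Icc 1 r, κ i * d i * (1 / β i)) + c * (1 / βa)
          - (1 / 4) * ∑ i ∈ Icc 1 (r + s), d i * (1 - κ i)
              * ((1 / βa) ^ 2 / max (1 / β i) ((1 / βa) ^ 2 / R)) := by
    intro βa β
    simp only [FF]
    rw [vv_toX_zero N hNpos]
    rw [show ∑ i ∈ Icc 1 r, κ i * d i * vv N (toX N βa β) i
        = ∑ i ∈ Icc 1 r, κ i * d i * (1 / β i) from
      Finset.sum_congr rfl fun i hi => by
        rw [vv_toX N βa β i (hne0 i (hsubIcc hi)) (hltN i (hsubIcc hi))]]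
    rw [show ∑ i ∈ Icc 1 (r + s), d i * (1 - κ i)
          * ((1 / βa) ^ 2 / max (vv N (toX N βa β) i) ((1 / βa) ^ 2 / R))
        = ∑ i ∈ Icc 1 (r + s), d i * (1 - κ i)
          * ((1 / βa) ^ 2 / max (1 / β i) ((1 / βa) ^ 2 / R)) from
      Finset.sum_congr rfl fun i hi => by
        rw [vv_toX N βa β i (hne0 i hi) (hltN i hi)]]
  -- S is dominated by FF
  have hSle : ∀ (βa : ℝ) (β : ℕ → ℝ), 0 < βa → (∀ i ∈ Icc 1 (r + s), 0 < β i) →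
      S βa β ≤ FF r (r + s) N d κ c R (toX N βa β) := by
    intro βa β hβa hβ
    rw [hSdec βa β hβa hβ, hFFdec βa β]
    have key : ∑ i ∈ Icc 1 (r + s), d i * (1 - κ i)
          * ((1 / βa) ^ 2 / max (1 / β i) ((1 / βa) ^ 2 / R))
        ≤ ∑ i ∈ Icc 1 (r + s), d i * (1 - κ i) * ((1 / βa) ^ 2 / (1 / β i)) := by
      apply Finset.sum_le_sum
      intro i hi
      have h1 : (0:ℝ) < 1 / β i := one_div_pos.mpr (hβ i hi)
      have h2 : (0:ℝ) ≤ d i * (1 - κ i) := (mul_pos (hd i hi) (h1κ i hi)).le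
      have h3 : (1 / βa) ^ 2 / max (1 / β i) ((1 / βa) ^ 2 / R) ≤ (1 / βa) ^ 2 / (1 / β i) := by
        gcongr
        · exact le_max_left _ _
      exact mul_le_mul_of_nonneg_left h3 h2
    linarith
  -- S equals FF in the non-truncated region
  have hSeq : ∀ (βa : ℝ) (β : ℕ → ℝ), 0 < βa → (∀ i ∈ Icc 1 (r + s), 0 < β i) →
      (∀ i ∈ Icc 1 (r + s), (1 / βa) ^ 2 / R ≤ 1 / β i) →
      S βa β = FF r (r + s) N d κ c R (toX N βa β) := by
    intro βa β hβa hβ huntr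
    rw [hSdec βa β hβa hβ, hFFdec βa β]
    rw [show ∑ i ∈ Icc 1 (r + s), d i * (1 - κ i)
          * ((1 / βa) ^ 2 / max (1 / β i) ((1 / βa) ^ 2 / R))
        = ∑ i ∈ Icc 1 (r + s), d i * (1 - κ i) * ((1 / βa) ^ 2 / (1 / β i)) from
      Finset.sum_congr rfl fun i hi => by rw [max_eq_left (huntr i hi)]]
  -- the initial point is non-truncated
  have huntr0 : ∀ i ∈ Icc 1 (r + s), (1 / t0) ^ 2 / R ≤ 1 / α0 i := by
    intro i hi
    rw [hα0]; dsimp only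
    have h3 : (1 / t0) ^ 2 / R = 1 / (t0 ^ 2 * R) := by
      rw [div_pow, one_pow, div_div]
    split
    · have h1 : φ / t0 ^ 2 ≤ R := by
        rw [hR]; exact le_trans (le_max_right _ _) (le_max_left _ _)
      have h2 : φ ≤ R * t0 ^ 2 := by
        rw [div_le_iff₀ (by positivity)] at h1
        linarith
      rw [h3]
      refine one_div_le_one_div_of_le hφpos ?_
      calc φ ≤ R * t0 ^ 2 := h2
      _ = t0 ^ 2 * R := mul_comm _ _
    · have h1 : 1 / t0 ≤ R := by
        rw [hR]; exact le_trans (le_max_left _ _) (le_max_left _ _)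
      have h2 : (1:ℝ) ≤ R * t0 := by
        rw [div_le_iff₀ ht0pos] at h1
        linarith
      rw [h3]
      refine one_div_le_one_div_of_le ht0pos ?_
      calc t0 = t0 * 1 := (mul_one _).symm
      _ ≤ t0 * (R * t0) := mul_le_mul_of_nonneg_left h2 ht0pos.le
      _ = t0 ^ 2 * R := by ring
  -- the compact region
  set lb : Fin N → ℝ := fun j => if j.val = 0 then δ else 0 with hlb
  set ub : Fin N → ℝ := fun j => if j.val = 0 then M else 1 / (d j.val * T j.val) with hub
  set KS : Set (Fin N → ℝ) := (Set.univ.pi fun j => Set.Icc (lb j) (ub j))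
      ∩ {x | (n : ℝ) * Ta * vv N x 0 + ∑ i ∈ Icc 1 (r + s), d i * T i * vv N x i = 1} with hKS
  have hKcomp : IsCompact KS := by
    apply IsCompact.inter_right (isCompact_univ_pi fun j => isCompact_Icc)
    exact isClosed_eq (((continuous_const.mul (continuous_vv N 0)).add
      (continuous_finset_sum _ fun i _ => continuous_const.mul (continuous_vv N i))))
      continuous_const
  -- membership criterion
  have hmemK : ∀ (βa : ℝ) (β : ℕ → ℝ), 0 < βa → (∀ i ∈ Icc 1 (r + s), 0 < β i) →
      ((n : ℝ) * Ta / βa + ∑ i ∈ Icc 1 (r + s), d i * T i / β i = 1) →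
      δ ≤ 1 / βa → 1 / βa ≤ M → toX N βa β ∈ KS := by
    intro βa β hβa hβ hcon h1 h2
    constructor
    · rw [Set.mem_univ_pi]
      intro j
      by_cases hj : j.val = 0
      · have e : toX N βa β j = 1 / βa := if_pos hj
        have e1 : lb j = δ := by rw [hlb]; exact if_pos hj
        have e2 : ub j = M := by rw [hub]; exact if_pos hj
        rw [e, e1, e2]
        exact Set.mem_Icc.mpr ⟨h1, h2⟩
      · have hjI : j.val ∈ Icc 1 (r + s) := by
          rw [mem_Icc]
          have := j.isLt
          omega
        have e : toX N βa β j = 1 / β j.val := if_neg hj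
        have e1 : lb j = 0 := by rw [hlb]; exact if_neg hj
        have e2 : ub j = 1 / (d j.val * T j.val) := by rw [hub]; exact if_neg hj
        rw [e, e1, e2]
        refine Set.mem_Icc.mpr ⟨le_of_lt (one_div_pos.mpr (hβ _ hjI)), ?_⟩
        have h3 : d j.val * T j.val / β j.val ≤ 1 := hterm_le_one βa β hβa hβ hcon _ hjI
        have h4 : d j.val * T j.val ≤ β j.val := (div_le_one (hβ _ hjI)).mp h3
        exact one_div_le_one_div_of_le (hdT _ hjI) h4
    · show (n : ℝ) * Ta * vv N (toX N βa β) 0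
          + ∑ i ∈ Icc 1 (r + s), d i * T i * vv N (toX N βa β) i = 1
      rw [vv_toX_zero N hNpos]
      rw [show ∑ i ∈ Icc 1 (r + s), d i * T i * vv N (toX N βa β) i
          = ∑ i ∈ Icc 1 (r + s), d i * T i / β i from
        Finset.sum_congr rfl fun i hi => by
          rw [vv_toX N βa β i (hne0 i hi) (hltN i hi), mul_one_div]]
      rw [mul_one_div]
      exact hcon
  have hKne : KS.Nonempty := ⟨toX N t0 α0, hmemK t0 α0 ht0pos hα0pos hcon0 hδM.1 hδM.2⟩
  have hvv0 : ∀ x : Fin N → ℝ, vv N x 0 = x ⟨0, hNpos⟩ := fun x => dif_pos hNpos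
  have hKsub : KS ⊆ {x | δ ≤ vv N x 0} := by
    intro x hx
    have h := Set.mem_univ_pi.mp hx.1 ⟨0, hNpos⟩
    have e1 : lb ⟨0, hNpos⟩ = δ := by rw [hlb]; rfl
    rw [e1] at h
    show δ ≤ vv N x 0
    rw [hvv0 x]
    exact h.1
  obtain ⟨xs, hxsK, hxsmax'⟩ := hKcomp.exists_isMaxOn hKne
    ((FF_contOn r (r + s) N d κ c R δ hRpos hδpos).mono hKsub)
  have hxsmax : ∀ y ∈ KS, FF r (r + s) N d κ c R y ≤ FF r (r + s) N d κ c R xs :=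
    fun y hy => hxsmax' hy
  -- coordinates of the maximiser
  have hxs0 : δ ≤ vv N xs 0 ∧ vv N xs 0 ≤ M := by
    have h := Set.mem_univ_pi.mp hxsK.1 ⟨0, hNpos⟩
    have e1 : lb ⟨0, hNpos⟩ = δ := by rw [hlb]; rfl
    have e2 : ub ⟨0, hNpos⟩ = M := by rw [hub]; rfl
    rw [e1, e2] at h
    rw [hvv0 xs]
    exact h
  have huspos : 0 < vv N xs 0 := lt_of_lt_of_le hδpos hxs0.1
  have hxsbox : ∀ i ∈ Icc 1 (r + s), 0 ≤ vv N xs i ∧ vv N xs i ≤ 1 / (d i * T i) := by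
    intro i hi
    have h := Set.mem_univ_pi.mp hxsK.1 ⟨i, hltN i hi⟩
    have e1 : lb ⟨i, hltN i hi⟩ = 0 := by rw [hlb]; exact if_neg (hne0 i hi)
    have e2 : ub ⟨i, hltN i hi⟩ = 1 / (d i * T i) := by rw [hub]; exact if_neg (hne0 i hi)
    rw [e1, e2] at h
    have e3 : vv N xs i = xs ⟨i, hltN i hi⟩ := dif_pos _
    rw [e3]
    exact h
  have hxscon : (n : ℝ) * Ta * vv N xs 0 + ∑ i ∈ Icc 1 (r + s), d i * T i * vv N xs i = 1 :=
    hxsK.2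
  -- value of FF at the initial point
  have hFFx0 : FF r (r + s) N d κ c R (toX N t0 α0) = V0 := by
    rw [hV0]
    exact (hSeq t0 α0 ht0pos hα0pos huntr0).symm
  have hVleFF : V0 ≤ FF r (r + s) N d κ c R xs := by
    rw [← hFFx0]
    exact hxsmax _ (hmemK t0 α0 ht0pos hα0pos hcon0 hδM.1 hδM.2)
  have hwsum : ∑ i ∈ Icc 1 (r + s), d i * T i * vv N xs i ≤ 1 := by
    have h0 : 0 ≤ (n : ℝ) * Ta * vv N xs 0 :=
      mul_nonneg (mul_nonneg (Nat.cast_nonneg n) hTa) huspos.le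
    linarith [hxscon]
  have hLxs : 1 / 4 * ∑ i ∈ Icc 1 r, κ i * d i * vv N xs i ≤ κ m / (4 * T m) :=
    hLbound (vv N xs) (fun i hi => (hxsbox i hi).1) hwsum
  have hFFxs : FF r (r + s) N d κ c R xs
      = 1 / 4 * ∑ i ∈ Icc 1 r, κ i * d i * vv N xs i + c * vv N xs 0
        - 1 / 4 * ∑ i ∈ Icc 1 (r + s), d i * (1 - κ i)
            * ((vv N xs 0) ^ 2 / max (vv N xs i) ((vv N xs 0) ^ 2 / R)) := rfl
  -- no truncation at the maximiser
  have huntrs : ∀ i ∈ Icc 1 (r + s), (vv N xs 0) ^ 2 / R ≤ vv N xs i := by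
    intro i hi
    by_contra hcon'
    push_neg at hcon'
    have hterm : d i * (1 - κ i) * ((vv N xs 0) ^ 2 / max (vv N xs i) ((vv N xs 0) ^ 2 / R))
        = d i * (1 - κ i) * R := by
      rw [max_eq_right hcon'.le]
      congr 1
      field_simp
    have hnonneg : ∀ j ∈ Icc 1 (r + s),
        0 ≤ d j * (1 - κ j) * ((vv N xs 0) ^ 2 / max (vv N xs j) ((vv N xs 0) ^ 2 / R)) := by
      intro j hj
      have h1 : 0 < (vv N xs 0) ^ 2 / R := div_pos (pow_pos huspos 2) hRpos
      have h2 : 0 < max (vv N xs j) ((vv N xs 0) ^ 2 / R) :=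
        lt_of_lt_of_le h1 (le_max_right _ _)
      have h3 : 0 ≤ d j * (1 - κ j) := (mul_pos (hd j hj) (h1κ j hj)).le
      have h4 : 0 ≤ (vv N xs 0) ^ 2 / max (vv N xs j) ((vv N xs 0) ^ 2 / R) :=
        div_nonneg (sq_nonneg _) h2.le
      exact mul_nonneg h3 h4
    have hsingle : d i * (1 - κ i) * R
        ≤ ∑ j ∈ Icc 1 (r + s), d j * (1 - κ j)
            * ((vv N xs 0) ^ 2 / max (vv N xs j) ((vv N xs 0) ^ 2 / R)) := by
      rw [← hterm]
      exact Finset.single_le_sum hnonneg hi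
    have hcu : c * vv N xs 0 ≤ c * M := mul_le_mul_of_nonneg_left hxs0.2 hcpos.le
    have hρRi : ρ * R ≤ d i * (1 - κ i) * R :=
      mul_le_mul_of_nonneg_right (hρle i hi) hRpos.le
    have hFFle : FF r (r + s) N d κ c R xs ≤ κ m / (4 * T m) + c * M - 1 / 4 * (ρ * R) := by
      rw [hFFxs]
      linarith
    linarith [hρR, hVleFF]
  have hwpos : ∀ i ∈ Icc 1 (r + s), 0 < vv N xs i := fun i hi =>
    lt_of_lt_of_le (div_pos (pow_pos huspos 2) hRpos) (huntrs i hi)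
  -- the maximiser as a constraint point
  set αa : ℝ := 1 / vv N xs 0 with hαa
  set α1 : ℕ → ℝ := fun i => if i ∈ Icc 1 (r + s) then 1 / vv N xs i else 1 with hα1
  have hαapos : 0 < αa := by rw [hαa]; exact one_div_pos.mpr huspos
  have hα1pos : ∀ i ∈ Icc 1 (r + s), 0 < α1 i := by
    intro i hi
    rw [hα1]
    dsimp only
    rw [if_pos hi]
    exact one_div_pos.mpr (hwpos i hi)
  have htoX : toX N αa α1 = xs := by
    funext j
    by_cases hj : j.val = 0
    · have e : toX N αa α1 j = 1 / αa := if_pos hj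
      rw [e, hαa, one_div_one_div]
      have hj' : j = ⟨0, hNpos⟩ := Fin.ext hj
      rw [hj', ← hvv0 xs]
    · have hjI : j.val ∈ Icc 1 (r + s) := by
        rw [mem_Icc]
        have := j.isLt
        omega
      have e : toX N αa α1 j = 1 / α1 j.val := if_neg hj
      rw [e, hα1]
      dsimp only
      rw [if_pos hjI, one_div_one_div]
      simp [vv, j.isLt]
  have hconα : (n : ℝ) * Ta / αa + ∑ i ∈ Icc 1 (r + s), d i * T i / α1 i = 1 := by
    rw [hαa]
    have e0 : (n : ℝ) * Ta / (1 / vv N xs 0) = (n : ℝ) * Ta * vv N xs 0 := by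
      rw [one_div, div_inv_eq_mul]
    rw [e0]
    rw [show ∑ i ∈ Icc 1 (r + s), d i * T i / α1 i
        = ∑ i ∈ Icc 1 (r + s), d i * T i * vv N xs i from
      Finset.sum_congr rfl fun i hi => by
        rw [hα1]
        dsimp only
        rw [if_pos hi, one_div, div_inv_eq_mul]]
    exact hxscon
  have hSα : S αa α1 = FF r (r + s) N d κ c R xs := by
    rw [← htoX]
    apply hSeq αa α1 hαapos hα1pos
    intro i hi
    rw [hαa, one_div_one_div]
    rw [hα1]
    dsimp only
    rw [if_pos hi, one_div_one_div]
    exact huntrs i hi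
  -- conclusion
  refine ⟨αa, α1, ⟨hαapos, hα1pos, hconα⟩, ?_⟩
  intro βa β hβa hβ hconβ
  rw [hSα]
  have hupos : 0 < 1 / βa := one_div_pos.mpr hβa
  have hdec := hSdec βa β hβa hβ
  have hwsumβ : ∑ i ∈ Icc 1 (r + s), d i * T i * (1 / β i) ≤ 1 := by
    have h0 : 0 ≤ (n : ℝ) * Ta / βa := by positivity
    have e : ∑ i ∈ Icc 1 (r + s), d i * T i * (1 / β i)
        = ∑ i ∈ Icc 1 (r + s), d i * T i / β i :=
      Finset.sum_congr rfl fun i _ => mul_one_div _ _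
    rw [e]
    linarith [hconβ]
  have hL := hLbound (fun i => 1 / β i)
    (fun i hi => (one_div_pos.mpr (hβ i hi)).le) hwsumβ
  by_cases h1 : 1 / βa < δ
  · have hQnn : 0 ≤ ∑ i ∈ Icc 1 (r + s), d i * (1 - κ i) * ((1 / βa) ^ 2 / (1 / β i)) := by
      apply Finset.sum_nonneg
      intro i hi
      have h3 : 0 ≤ d i * (1 - κ i) := (mul_pos (hd i hi) (h1κ i hi)).le
      have h4 : 0 ≤ (1 / βa) ^ 2 / (1 / β i) :=
        div_nonneg (sq_nonneg _) (one_div_pos.mpr (hβ i hi)).le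
      exact mul_nonneg h3 h4
    have hcu : c * (1 / βa) ≤ c * δ := mul_le_mul_of_nonneg_left h1.le hcpos.le
    have hcδ : c * δ ≤ (V0 - κ m / (4 * T m)) / 2 := by
      have h3 : δ ≤ (V0 - κ m / (4 * T m)) / (2 * c) := by rw [hδ]; exact min_le_right _ _
      calc c * δ ≤ c * ((V0 - κ m / (4 * T m)) / (2 * c)) :=
            mul_le_mul_of_nonneg_left h3 hcpos.le
      _ = (V0 - κ m / (4 * T m)) / 2 := by field_simp
    rw [hdec]
    linarith [hVgt, hVleFF]
  push_neg at h1
  by_cases h2 : 1 / βa ≤ M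
  · exact le_trans (hSle βa β hβa hβ) (hxsmax _ (hmemK βa β hβa hβ hconβ h1 h2))
  push_neg at h2
  have hβm : d m * T m ≤ β m :=
    (div_le_one (hβ m hmIcc)).mp (hterm_le_one βa β hβa hβ hconβ m hmIcc)
  have e : (1 / βa) ^ 2 / (1 / β m) = (1 / βa) ^ 2 * β m := by
    rw [one_div (β m), div_inv_eq_mul]
  have h4 : 0 ≤ d m * (1 - κ m) * (1 / βa) ^ 2 :=
    mul_nonneg (mul_pos hdm (h1κ m hmIcc)).le (sq_nonneg _)
  have htm : γ * (1 / βa) ^ 2 ≤ d m * (1 - κ m) * ((1 / βa) ^ 2 / (1 / β m)) := by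
    calc γ * (1 / βa) ^ 2 = d m * (1 - κ m) * (1 / βa) ^ 2 * (d m * T m) := by rw [hγ]; ring
    _ ≤ d m * (1 - κ m) * (1 / βa) ^ 2 * β m := mul_le_mul_of_nonneg_left hβm h4
    _ = d m * (1 - κ m) * ((1 / βa) ^ 2 * β m) := by ring
    _ = d m * (1 - κ m) * ((1 / βa) ^ 2 / (1 / β m)) := by rw [e]
  have hsingle : d m * (1 - κ m) * ((1 / βa) ^ 2 / (1 / β m))
      ≤ ∑ i ∈ Icc 1 (r + s), d i * (1 - κ i) * ((1 / βa) ^ 2 / (1 / β i)) := by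
    apply Finset.single_le_sum (f := fun i => d i * (1 - κ i) * ((1 / βa) ^ 2 / (1 / β i)))
      _ hmIcc
    intro i hi
    exact mul_nonneg (mul_pos (hd i hi) (h1κ i hi)).le
      (div_nonneg (sq_nonneg _) (one_div_pos.mpr (hβ i hi)).le)
  have h5 : γ * M < γ * (1 / βa) := mul_lt_mul_of_pos_left h2 hγpos
  have h6 : 4 * c < γ * (1 / βa) := lt_of_le_of_lt hγM h5
  have h7 : 4 * c * (1 / βa) < γ * (1 / βa) * (1 / βa) :=
    mul_lt_mul_of_pos_right h6 hupos
  have h8 : γ * (1 / βa) ^ 2 = γ * (1 / βa) * (1 / βa) := by ring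
  rw [hdec]
  linarith [hVgt, hVleFF]
end
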